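/- arXiv:2602.17012 — 3 statements merged into one kernel-verified Lean document; each statement's English description precedes it below -/
import Mathlib

section
/- Let N ≥ 2 and let t₁,…,t_N ∈ (0,1), extended periodically in the index modulo N. Suppose points P_k, X_k in ℝ^d (indices modulo N) satisfy P_{k+1} = t_k X_k + (1 - t_k) P_k for all k. Then for every index i (mod N), P_i = Σ_{j=1}^N ν_i^j X_j, where ν_i^{i-1} = t_{i-1} / (1 - (1-t_1)⋯(1-t_N)), and for i-N ≤ j ≤ i-2, ν_i^j = (1-t_{i-1})(1-t_{i-2})⋯(1-t_{j+1}) t_j / (1 - (1-t_1)⋯(1-t_N)), all indices taken modulo N. -/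
theorem stmt_2 (d N : ℕ) (hN : 2 ≤ N)
    (t : ℕ → ℝ) (P X : ℕ → Fin d → ℝ)
    (ht : ∀ k, t k ∈ Set.Ioo (0:ℝ) 1)
    (htp : ∀ k, t (k + N) = t k) (hPp : ∀ k, P (k + N) = P k) (hXp : ∀ k, X (k + N) = X k)
    (hrec : ∀ k, P (k + 1) = t k • X k + (1 - t k) • P k) :
    ∀ i : ℕ, P i = ∑ s ∈ Finset.range N,
      (((∏ r ∈ Finset.range s, (1 - t (i + N - (r + 1)))) * t (i + N - (s + 1)))
        / (1 - ∏ k ∈ Finset.range N, (1 - t k))) • X (i + N - (s + 1)) := by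
  intro i
  -- iterated recurrence
  have key : ∀ m i, P (i + m) = (∏ r ∈ Finset.range m, (1 - t (i + m - (r + 1)))) • P i
      + ∑ s ∈ Finset.range m,
        ((∏ r ∈ Finset.range s, (1 - t (i + m - (r + 1)))) * t (i + m - (s + 1)))
          • X (i + m - (s + 1)) := by
    intro m
    induction m with
    | zero => intro i; simp
    | succ m ih =>
      intro i
      have h1 : i + (m + 1) = (i + m) + 1 := by ring
      have e1 : ∀ r : ℕ, i + m + 1 - (r + 1 + 1) = i + m - (r + 1) := fun r => by omega
      have e2 : i + m + 1 - (0 + 1) = i + m := by omega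
      rw [h1, hrec (i + m), ih i, Finset.prod_range_succ', Finset.sum_range_succ']
      simp only [e1, e2, Finset.prod_range_succ', Finset.prod_range_zero, one_mul,
        smul_add, Finset.smul_sum, smul_smul]
      rw [show (∑ s ∈ Finset.range m,
          ((∏ r ∈ Finset.range s, (1 - t (i + m - (r + 1)))) * (1 - t (i + m))
            * t (i + m - (s + 1))) • X (i + m - (s + 1)))
        = ∑ s ∈ Finset.range m,
          ((1 - t (i + m)) * ((∏ r ∈ Finset.range s, (1 - t (i + m - (r + 1))))
            * t (i + m - (s + 1)))) • X (i + m - (s + 1)) from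
        Finset.sum_congr rfl fun s _ => by congr 1; ring]
      rw [mul_comm]
      abel
  -- window product of a periodic function
  have shift : ∀ f : ℕ → ℝ, (∀ k, f (k + N) = f k) →
      ∀ a, ∏ k ∈ Finset.range N, f (a + k) = ∏ k ∈ Finset.range N, f k := by
    intro f hf a
    induction a with
    | zero => simp
    | succ a ih =>
      rw [← ih]
      obtain ⟨M, rfl⟩ : ∃ M, N = M + 1 := ⟨N - 1, by omega⟩
      have h2 : f (a + 1 + M) = f a := by
        rw [show a + 1 + M = a + (M + 1) from by omega]; exact hf a
      rw [Finset.prod_range_succ, Finset.prod_range_succ', h2]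
      simp only [show ∀ x : ℕ, a + 1 + x = a + (x + 1) from fun x => by omega, Nat.add_zero]
  have hq : ∏ r ∈ Finset.range N, (1 - t (i + N - (r + 1)))
      = ∏ k ∈ Finset.range N, (1 - t k) := by
    rw [← shift (fun k => 1 - t k) (fun k => by simp [htp k]) i]
    rw [← Finset.prod_range_reflect (fun j => 1 - t (i + j)) N]
    exact Finset.prod_congr rfl fun r hr => by
      have := Finset.mem_range.mp hr
      congr 2
      omega
  set q : ℝ := ∏ k ∈ Finset.range N, (1 - t k) with hqdef
  have hq1 : q < 1 := by
    have h : q < ∏ k ∈ Finset.range N, (1 : ℝ) :=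
      Finset.prod_lt_prod_of_nonempty
        (fun k _ => by have := (ht k).2; linarith)
        (fun k _ => by have := (ht k).1; linarith)
        (Finset.nonempty_range_iff.mpr (by omega))
    rwa [Finset.prod_const_one] at h
  have hD : (1 : ℝ) - q ≠ 0 := by
    intro h; rw [sub_eq_zero] at h; exact absurd h.symm (ne_of_lt hq1)
  have hmain := key N i
  rw [hPp i, hq] at hmain
  have hS : (1 - q) • P i = ∑ s ∈ Finset.range N,
      ((∏ r ∈ Finset.range s, (1 - t (i + N - (r + 1)))) * t (i + N - (s + 1)))
        • X (i + N - (s + 1)) := by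
    rw [sub_smul, one_smul]
    exact sub_eq_of_eq_add' hmain
  calc P i = (1 - q)⁻¹ • ((1 - q) • P i) := (inv_smul_smul₀ hD _).symm
    _ = _ := by
      rw [hS, Finset.smul_sum]
      exact Finset.sum_congr rfl fun s _ => by
        rw [smul_smul, div_eq_inv_mul]
end

section
/- Let N ≥ 2, 0 < δ₁ < δ₂ < 1, δ₂ < λ ≤ 1, and suppose χ₁,…,χ_N ∈ [δ₁, δ₂]. Set t_k = χ_k/λ ∈ (0,1) for each k. Then the coefficients ν_i^j defined by the cyclic formula ν_i^{i-1} = t_{i-1}/(1-τ), ν_i^j = (1-t_{i-1})⋯(1-t_{j+1}) t_j/(1-τ) for i-N ≤ j ≤ i-2 (indices mod N, τ = ∏(1-t_k)) satisfy ν_i^j ≥ (λ - δ₂)^{N-1} δ₁ for all i, j. -/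
theorem stmt_4 (N : ℕ) (hN : 2 ≤ N) (δ₁ δ₂ lam : ℝ)
    (h1 : 0 < δ₁) (h12 : δ₁ < δ₂) (h2 : δ₂ < 1) (hl : δ₂ < lam) (hl1 : lam ≤ 1)
    (χ : ℕ → ℝ) (hχ : ∀ k, χ k ∈ Set.Icc δ₁ δ₂) (hχp : ∀ k, χ (k + N) = χ k)
    (t : ℕ → ℝ) (htdef : ∀ k, t k = χ k / lam) :
    ∀ i : ℕ, ∀ s ∈ Finset.range N,
      (lam - δ₂) ^ (N - 1) * δ₁ ≤
        ((∏ r ∈ Finset.range s, (1 - t (i + N - (r + 1)))) * t (i + N - (s + 1)))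
          / (1 - ∏ k ∈ Finset.range N, (1 - t k)) := by
  intro i s hs
  have hlam : 0 < lam := lt_trans (lt_trans h1 h12) hl
  have htlo : ∀ k, δ₁ / lam ≤ t k := fun k => by
    rw [htdef k]; gcongr; exact (hχ k).1
  have hthi : ∀ k, t k ≤ δ₂ / lam := fun k => by
    rw [htdef k]; exact div_le_div_of_nonneg_right (hχ k).2 hlam.le
  have htpos : ∀ k, 0 < t k := fun k =>
    lt_of_lt_of_le (div_pos h1 hlam) (htlo k)
  have hfac_lo : ∀ k, (1 : ℝ) - δ₂ / lam ≤ 1 - t k := fun k => by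
    linarith [hthi k]
  have hfac_hi : ∀ k, 1 - t k ≤ 1 - δ₁ / lam := fun k => by
    linarith [htlo k]
  have hc : (0:ℝ) < 1 - δ₂ / lam := by
    have : δ₂ / lam < 1 := (div_lt_one hlam).2 hl
    linarith
  have hc1 : (1:ℝ) - δ₂ / lam ≤ 1 := by
    have : 0 < δ₂ / lam := div_pos (lt_trans h1 h12) hlam
    linarith
  have hd : (0:ℝ) < 1 - δ₁ / lam := by
    have : δ₁ / lam < 1 := (div_lt_one hlam).2 (lt_trans h12 hl)
    linarith
  have hd1 : (1:ℝ) - δ₁ / lam < 1 := by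
    have : 0 < δ₁ / lam := div_pos h1 hlam
    linarith
  -- τ bounds
  have hτpos : 0 < ∏ k ∈ Finset.range N, (1 - t k) :=
    Finset.prod_pos (fun k _ => lt_of_lt_of_le hc (hfac_lo k))
  have hτlt : ∏ k ∈ Finset.range N, (1 - t k) < 1 := by
    calc ∏ k ∈ Finset.range N, (1 - t k)
        ≤ ∏ k ∈ Finset.range N, (1 - δ₁ / lam) :=
          Finset.prod_le_prod (fun k _ => le_of_lt (lt_of_lt_of_le hc (hfac_lo k)))
            (fun k _ => hfac_hi k)
      _ = (1 - δ₁ / lam) ^ N := by rw [Finset.prod_const, Finset.card_range]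
      _ < 1 := pow_lt_one₀ (le_of_lt hd) hd1 (by omega)
  have hden : 0 < 1 - ∏ k ∈ Finset.range N, (1 - t k) := by linarith
  have hden1 : 1 - ∏ k ∈ Finset.range N, (1 - t k) ≤ 1 := by linarith
  -- numerator lower bound
  have hprod : (1 - δ₂ / lam) ^ s ≤ ∏ r ∈ Finset.range s, (1 - t (i + N - (r + 1))) := by
    calc (1 - δ₂ / lam) ^ s = ∏ r ∈ Finset.range s, (1 - δ₂ / lam) := by
          rw [Finset.prod_const, Finset.card_range]
      _ ≤ _ := Finset.prod_le_prod (fun k _ => le_of_lt hc) (fun k _ => hfac_lo _)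
  have hbase : lam - δ₂ ≤ 1 - δ₂ / lam := by
    have : lam - δ₂ = (1 - δ₂ / lam) * lam := by field_simp
    rw [this]
    nlinarith [hc]
  have hbasepos : (0:ℝ) ≤ lam - δ₂ := by linarith
  have hsle : N - 1 ≥ s := by simp at hs; omega
  have hpow : (lam - δ₂) ^ (N - 1) ≤ (1 - δ₂ / lam) ^ s :=
    calc (lam - δ₂) ^ (N - 1) ≤ (1 - δ₂ / lam) ^ (N - 1) :=
          pow_le_pow_left₀ hbasepos hbase _
      _ ≤ (1 - δ₂ / lam) ^ s := pow_le_pow_of_le_one (le_of_lt hc) hc1 hsle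
  have htge : δ₁ ≤ t (i + N - (s + 1)) := by
    have := htlo (i + N - (s + 1))
    have : δ₁ ≤ δ₁ / lam := le_div_self (le_of_lt h1) hlam hl1
    linarith [htlo (i + N - (s + 1))]
  have hnum' : (lam - δ₂) ^ (N - 1) * δ₁ ≤
      (∏ r ∈ Finset.range s, (1 - t (i + N - (r + 1)))) * t (i + N - (s + 1)) := by
    have h1' : (lam - δ₂) ^ (N - 1) * δ₁ ≤ (1 - δ₂ / lam) ^ s * t (i + N - (s + 1)) := by
      apply mul_le_mul hpow htge (le_of_lt h1) (pow_nonneg (le_of_lt hc) _)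
    refine le_trans h1' (mul_le_mul_of_nonneg_right hprod (le_of_lt (htpos _)))
  rw [le_div_iff₀ hden]
  calc (lam - δ₂) ^ (N - 1) * δ₁ * (1 - ∏ k ∈ Finset.range N, (1 - t k))
      ≤ (lam - δ₂) ^ (N - 1) * δ₁ * 1 := by
        apply mul_le_mul_of_nonneg_left hden1
        exact mul_nonneg (pow_nonneg hbasepos _) (le_of_lt h1)
    _ = (lam - δ₂) ^ (N - 1) * δ₁ := by ring
    _ ≤ _ := hnum'
end

section
/- Let a ∈ ℝ^n \ {0}, G̃ ⊂ ℝ^n a bounded measurable set, and let I ⊂ (0,1) be an interval with characteristic function χ extended 1-periodically to ℝ. For δ > 0 define G̃^δ = { x ∈ G̃ : χ(a·x/δ) = 1 }. Then with δ_ℓ = |a|/ℓ, one has |G̃^{δ_ℓ}| → |I| · |G̃| as ℓ → ∞ over positive integers. -/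
open MeasureTheory Filter Set
open scoped symmDiff ENNReal RealInnerProductSpace

lemma Emeas (c₁ c₂ r : ℝ) : MeasurableSet {t : ℝ | Int.fract (r * t) ∈ Set.Ioo c₁ c₂} :=
  (measurable_fract.comp (measurable_id.const_mul r)) measurableSet_Ioo

lemma window {c₁ c₂ : ℝ} (h0 : 0 < c₁) (h12 : c₁ ≤ c₂) (h21 : c₂ < 1) {ℓ : ℕ} (hℓ : 1 ≤ ℓ)
    (u : ℝ) :
    volume ({t : ℝ | Int.fract ((ℓ:ℝ) * t) ∈ Set.Ioo c₁ c₂} ∩ Set.Ioc u (u + 1/ℓ))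
      = ENNReal.ofReal ((c₂ - c₁)/ℓ) := by
  set E := {t : ℝ | Int.fract ((ℓ:ℝ) * t) ∈ Set.Ioo c₁ c₂} with hEdef
  have hℓ0 : (0:ℝ) < ℓ := by exact_mod_cast hℓ
  have hT : (0:ℝ) < 1/ℓ := by positivity
  have hfd1 := isAddFundamentalDomain_Ioc hT u volume
  have hfd2 := isAddFundamentalDomain_Ioc hT 0 volume
  have hE : MeasurableSet E := Emeas c₁ c₂ ℓ
  have hinv : ∀ g : AddSubgroup.zmultiples ((1:ℝ)/ℓ), (fun x => g +ᵥ x) ⁻¹' E = E := by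
    rintro ⟨g, hg⟩
    obtain ⟨k, rfl⟩ := hg
    ext t
    simp only [hEdef, Set.mem_preimage, Set.mem_setOf_eq, AddSubgroup.vadd_def,
      AddSubgroup.coe_mk, vadd_eq_add]
    have h : (ℓ:ℝ) * ((k • ((1:ℝ)/ℓ)) + t) = (k : ℝ) + ℓ * t := by
      rw [zsmul_eq_mul]
      field_simp
    rw [h, Int.fract_intCast_add]
  have key := hfd1.measure_set_eq hfd2 hE hinv
  have hset : E ∩ Set.Ioc 0 (0 + 1/ℓ) = Set.Ioo (c₁/ℓ) (c₂/ℓ) := by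
    rw [zero_add]
    ext t
    simp only [hEdef, Set.mem_inter_iff, Set.mem_setOf_eq, Set.mem_Ioo, Set.mem_Ioc]
    constructor
    · rintro ⟨⟨h1, h2⟩, h3, h4⟩
      have hle : (ℓ:ℝ) * t ≤ 1 := by
        rw [le_div_iff₀ hℓ0] at h4
        nlinarith
      rcases eq_or_lt_of_le hle with heq | hlt
      · exfalso
        rw [heq, Int.fract_one] at h1
        linarith
      · have hfr : Int.fract ((ℓ:ℝ)*t) = ℓ*t :=
          Int.fract_eq_self.mpr ⟨by positivity, hlt⟩
        rw [hfr] at h1 h2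
        constructor
        · rw [div_lt_iff₀ hℓ0]; nlinarith
        · rw [lt_div_iff₀ hℓ0]; nlinarith
    · rintro ⟨h1, h2⟩
      have h1' : c₁ < (ℓ:ℝ) * t := by rwa [div_lt_iff₀ hℓ0, mul_comm] at h1
      have h2' : (ℓ:ℝ) * t < c₂ := by rwa [lt_div_iff₀ hℓ0, mul_comm] at h2
      have hfr : Int.fract ((ℓ:ℝ)*t) = ℓ*t :=
        Int.fract_eq_self.mpr ⟨by linarith, by linarith⟩
      refine ⟨⟨by rw [hfr]; exact h1', by rw [hfr]; exact h2'⟩, ?_, ?_⟩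
      · have : (0:ℝ) < c₁/ℓ := by positivity
        linarith
      · have : t < 1/ℓ := by rw [lt_div_iff₀ hℓ0]; nlinarith
        linarith
  rw [key, hset, Real.volume_Ioo]
  congr 1
  field_simp

lemma fubini_id {c₁ c₂ : ℝ} (h0 : 0 < c₁) (h12 : c₁ ≤ c₂) (h21 : c₂ < 1) {ℓ : ℕ} (hℓ : 1 ≤ ℓ)
    {A : Set ℝ} (hA : MeasurableSet A) :
    ∫⁻ v in Set.Ioc 0 (1/(ℓ:ℝ)),
        volume (A ∩ (fun t => t + v) ⁻¹' {t : ℝ | Int.fract ((ℓ:ℝ) * t) ∈ Set.Ioo c₁ c₂})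
      = ENNReal.ofReal ((c₂ - c₁)/ℓ) * volume A := by
  set E := {t : ℝ | Int.fract ((ℓ:ℝ) * t) ∈ Set.Ioo c₁ c₂} with hEdef
  have hℓ0 : (0:ℝ) < ℓ := by exact_mod_cast hℓ
  have hE : MeasurableSet E := Emeas c₁ c₂ ℓ
  have h1 : ∀ v : ℝ, volume (A ∩ (fun t => t + v) ⁻¹' E)
      = ∫⁻ t, A.indicator 1 t * E.indicator 1 (t + v) := by
    intro v
    have hmeq : ∀ t : ℝ, A.indicator (1 : ℝ → ℝ≥0∞) t * E.indicator 1 (t + v)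
        = (A ∩ (fun t => t + v) ⁻¹' E).indicator 1 t := by
      intro t
      by_cases h1 : t ∈ A <;> by_cases h2 : t + v ∈ E <;>
        simp [Set.indicator_apply, h1, h2, Set.mem_preimage]
    simp_rw [hmeq]
    exact (lintegral_indicator_one (hA.inter ((measurable_add_const v) hE))).symm
  simp_rw [h1]
  rw [lintegral_lintegral_swap]
  · have h2 : ∀ t : ℝ, ∫⁻ v in Set.Ioc 0 (1/(ℓ:ℝ)), A.indicator 1 t * E.indicator 1 (t + v)
        = A.indicator 1 t * ENNReal.ofReal ((c₂ - c₁)/ℓ) := by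
      intro t
      rw [lintegral_const_mul]
      · congr 1
        have hmeq : ∀ v : ℝ, E.indicator (1 : ℝ → ℝ≥0∞) (t + v)
            = ((fun v : ℝ => t + v) ⁻¹' E).indicator 1 v := by
          intro v
          by_cases h2 : t + v ∈ E <;> simp [Set.indicator_apply, h2, Set.mem_preimage]
        simp_rw [hmeq]
        rw [lintegral_indicator_one ((measurable_const_add t) hE),
          Measure.restrict_apply ((measurable_const_add t) hE)]
        have hset : (fun v : ℝ => t + v) ⁻¹' E ∩ Set.Ioc 0 (1/(ℓ:ℝ))
            = (fun v : ℝ => t + v) ⁻¹' (E ∩ Set.Ioc t (t + 1/ℓ)) := by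
          rw [Set.preimage_inter]
          congr 1
          ext v
          simp only [Set.mem_preimage, Set.mem_Ioc]
          constructor
          · rintro ⟨hv1, hv2⟩; exact ⟨by linarith, by linarith⟩
          · rintro ⟨hv1, hv2⟩; exact ⟨by linarith, by linarith⟩
        rw [hset, measure_preimage_add, window h0 h12 h21 hℓ t]
      · exact (measurable_const.indicator hE).comp (measurable_const_add t)
    simp_rw [h2]
    rw [lintegral_mul_const' _ _ ENNReal.ofReal_ne_top, lintegral_indicator_one hA, mul_comm]
  · apply Measurable.aemeasurable
    exact ((measurable_const.indicator hA).comp measurable_snd).mul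
      ((measurable_const.indicator hE).comp (measurable_snd.add measurable_fst))

lemma trans_cont {A : Set ℝ} (hA : MeasurableSet A) (hfin : volume A ≠ ⊤) :
    Tendsto (fun v : ℝ => volume (((fun t => t + v) ⁻¹' A) ∆ A)) (nhds 0) (nhds 0) := by
  set F : C(ℝ × ℝ, ℝ) := ⟨fun p => p.2 + p.1, by continuity⟩ with hF
  have hcur : Continuous fun v : ℝ => F.curry v := (ContinuousMap.curry F).continuous
  have key := tendsto_measure_symmDiff_preimage_nhds_zero (μ := volume) (ν := volume)
    (f := fun v : ℝ => F.curry v) (g := F.curry 0) (s := A) (hcur.tendsto 0)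
    (Eventually.of_forall fun v => measurePreserving_add_right volume v)
    (measurePreserving_add_right volume 0) hA.nullMeasurableSet hfin
  have h0 : ⇑(F.curry 0) ⁻¹' A = A := by
    ext t; simp [F, ContinuousMap.curry_apply]
  rw [h0] at key
  have heq : ∀ v : ℝ, ⇑(F.curry v) ⁻¹' A = (fun t => t + v) ⁻¹' A := by
    intro v; ext t; simp [F, ContinuousMap.curry_apply]
  exact Tendsto.congr (fun v => by rw [heq v]) key


lemma oneD {c₁ c₂ : ℝ} (h0 : 0 < c₁) (h12 : c₁ ≤ c₂) (h21 : c₂ < 1) {A : Set ℝ}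
    (hA : MeasurableSet A) (hfin : volume A ≠ ⊤) :
    Tendsto (fun ℓ : ℕ => volume (A ∩ {t : ℝ | Int.fract ((ℓ:ℝ) * t) ∈ Set.Ioo c₁ c₂}))
      atTop (nhds (ENNReal.ofReal (c₂ - c₁) * volume A)) := by
  have h21' : (0:ℝ) ≤ c₂ - c₁ := by linarith
  set c := ENNReal.ofReal (c₂ - c₁) with hc
  set φ : ℝ → ℝ≥0∞ := fun v => volume (((fun t => t + (-v)) ⁻¹' A) ∆ A) with hφdef
  have hφ : Tendsto φ (nhds 0) (nhds 0) := by
    have h := trans_cont hA hfin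
    have hneg : Tendsto (fun v : ℝ => -v) (nhds 0) (nhds (0:ℝ)) := by
      simpa using (continuous_neg.tendsto (0:ℝ))
    exact h.comp hneg
  have hφmeas : Measurable φ := by
    have hW : MeasurableSet (({p : ℝ × ℝ | p.2 + -p.1 ∈ A}) ∆ ({p : ℝ × ℝ | p.2 ∈ A})) :=
      ((measurable_snd.add measurable_fst.neg) hA).symmDiff (measurable_snd hA)
    have h := measurable_measure_prodMk_left (ν := (volume : Measure ℝ)) hW
    have heq : φ = fun v : ℝ =>
        volume (Prod.mk v ⁻¹' (({p : ℝ × ℝ | p.2 + -p.1 ∈ A}) ∆ ({p : ℝ × ℝ | p.2 ∈ A}))) := by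
      funext v
      rw [Set.preimage_symmDiff]
      rfl
    rw [heq]
    exact h
  set ε : ℕ → ℝ≥0∞ := fun ℓ => (ℓ:ℝ≥0∞) * ∫⁻ v in Set.Ioc 0 (1/(ℓ:ℝ)), φ v with hεdef
  have hmul : ∀ ℓ : ℕ, 1 ≤ ℓ → (ℓ:ℝ≥0∞) * ENNReal.ofReal (1/(ℓ:ℝ)) = 1 := by
    intro ℓ hℓ
    have hℓ0 : (0:ℝ) < ℓ := by exact_mod_cast hℓ
    rw [one_div, ENNReal.ofReal_inv_of_pos hℓ0, ENNReal.ofReal_natCast]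
    exact ENNReal.mul_inv_cancel (by exact_mod_cast hℓ0.ne') (by simp)
  have hε : Tendsto ε atTop (nhds 0) := by
    rw [ENNReal.tendsto_nhds_zero]
    intro δ hδ
    have hev : ∀ᶠ v in nhds (0:ℝ), φ v < δ := hφ.eventually_lt_const hδ
    obtain ⟨η, hη0, hηball⟩ := Metric.eventually_nhds_iff.mp hev
    obtain ⟨N, hN⟩ := exists_nat_gt (1/η)
    filter_upwards [eventually_ge_atTop (max N 1)] with ℓ hℓ
    have hℓ1 : 1 ≤ ℓ := le_trans (le_max_right N 1) hℓ
    have hℓN : N ≤ ℓ := le_trans (le_max_left N 1) hℓ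
    have hℓ0 : (0:ℝ) < ℓ := by exact_mod_cast hℓ1
    have hb : ∀ v ∈ Set.Ioc 0 (1/(ℓ:ℝ)), φ v ≤ δ := by
      intro v hv
      refine le_of_lt (hηball ?_)
      rw [Real.dist_eq, sub_zero, abs_of_pos hv.1]
      have hlt : 1/η < (ℓ:ℝ) := lt_of_lt_of_le hN (by exact_mod_cast hℓN)
      rw [div_lt_iff₀ hη0] at hlt
      calc v ≤ 1/(ℓ:ℝ) := hv.2
        _ < η := by rw [div_lt_iff₀ hℓ0]; nlinarith
    have hint : ∫⁻ v in Set.Ioc 0 (1/(ℓ:ℝ)), φ v ≤ δ * ENNReal.ofReal (1/(ℓ:ℝ)) := by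
      calc ∫⁻ v in Set.Ioc 0 (1/(ℓ:ℝ)), φ v ≤ ∫⁻ _ in Set.Ioc 0 (1/(ℓ:ℝ)), δ :=
            setLIntegral_mono measurable_const hb
        _ = δ * volume (Set.Ioc 0 (1/(ℓ:ℝ))) := setLIntegral_const _ _
        _ = δ * ENNReal.ofReal (1/(ℓ:ℝ)) := by rw [Real.volume_Ioc, sub_zero]
    calc ε ℓ ≤ (ℓ:ℝ≥0∞) * (δ * ENNReal.ofReal (1/(ℓ:ℝ))) := mul_le_mul_right hint _
      _ = δ * ((ℓ:ℝ≥0∞) * ENNReal.ofReal (1/(ℓ:ℝ))) := by ring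
      _ = δ := by rw [hmul ℓ hℓ1, mul_one]
  -- key two-sided bounds
  have hbounds : ∀ ℓ : ℕ, 1 ≤ ℓ →
      c * volume A ≤ volume (A ∩ {t : ℝ | Int.fract ((ℓ:ℝ) * t) ∈ Set.Ioo c₁ c₂}) + ε ℓ ∧
      volume (A ∩ {t : ℝ | Int.fract ((ℓ:ℝ) * t) ∈ Set.Ioo c₁ c₂}) ≤ c * volume A + ε ℓ := by
    intro ℓ hℓ1
    have hℓ0 : (0:ℝ) < ℓ := by exact_mod_cast hℓ1
    set E := {t : ℝ | Int.fract ((ℓ:ℝ) * t) ∈ Set.Ioo c₁ c₂} with hEdef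
    have hE : MeasurableSet E := Emeas c₁ c₂ ℓ
    set T := volume (A ∩ E) with hT
    set S := Set.Ioc (0:ℝ) (1/(ℓ:ℝ)) with hS
    set g : ℝ → ℝ≥0∞ := fun v => volume (((fun t => t + (-v)) ⁻¹' A) ∩ E) with hgdef
    have hgmeas : Measurable g := by
      have hW : MeasurableSet ({p : ℝ × ℝ | p.2 + -p.1 ∈ A} ∩ {p : ℝ × ℝ | p.2 ∈ E}) :=
        ((measurable_snd.add measurable_fst.neg) hA).inter (measurable_snd hE)
      have h := measurable_measure_prodMk_left (ν := (volume : Measure ℝ)) hW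
      exact h
    have hGg : ∀ v : ℝ, volume (A ∩ (fun t => t + v) ⁻¹' E) = g v := by
      intro v
      have hme : NullMeasurableSet (((fun t => t + (-v)) ⁻¹' A) ∩ E) volume :=
        (((measurable_add_const (-v)) hA).inter hE).nullMeasurableSet
      have hmp := (measurePreserving_add_right volume v).measure_preimage hme
      calc volume (A ∩ (fun t => t + v) ⁻¹' E)
          = volume ((fun x => x + v) ⁻¹' ((fun t => t + (-v)) ⁻¹' A ∩ E)) := by
            congr 1
            ext t
            simp only [Set.mem_inter_iff, Set.mem_preimage, add_neg_cancel_right]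
        _ = g v := hmp
    have hub : ∀ v : ℝ, g v ≤ T + φ v := by
      intro v
      refine le_trans (measure_mono ?_) (measure_union_le _ _)
      rintro t ⟨htB, htE⟩
      by_cases h : t ∈ A
      · exact Or.inl ⟨h, htE⟩
      · exact Or.inr (Set.mem_symmDiff.mpr (Or.inl ⟨htB, h⟩))
    have hlb : ∀ v : ℝ, T ≤ g v + φ v := by
      intro v
      refine le_trans (measure_mono ?_) (measure_union_le _ _)
      rintro t ⟨htA, htE⟩
      by_cases h : t ∈ (fun t => t + (-v)) ⁻¹' A
      · exact Or.inl ⟨h, htE⟩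
      · exact Or.inr (Set.mem_symmDiff.mpr (Or.inr ⟨htA, h⟩))
    have hK : ∫⁻ v in S, g v = ENNReal.ofReal ((c₂ - c₁)/ℓ) * volume A := by
      have := fubini_id h0 h12 h21 hℓ1 hA
      rw [← this]
      exact setLIntegral_congr_fun measurableSet_Ioc
        (fun v _ => (hGg v).symm)
    have hvolS : volume S = ENNReal.ofReal (1/(ℓ:ℝ)) := by
      rw [hS, Real.volume_Ioc, sub_zero]
    have hKmul : (ℓ:ℝ≥0∞) * (ENNReal.ofReal ((c₂ - c₁)/ℓ) * volume A) = c * volume A := by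
      rw [show (c₂ - c₁)/(ℓ:ℝ) = (c₂ - c₁) * (1/ℓ) by ring, ENNReal.ofReal_mul h21', ← hc]
      calc (ℓ:ℝ≥0∞) * (c * ENNReal.ofReal (1/(ℓ:ℝ)) * volume A)
          = c * volume A * ((ℓ:ℝ≥0∞) * ENNReal.ofReal (1/(ℓ:ℝ))) := by ring
        _ = c * volume A := by rw [hmul ℓ hℓ1, mul_one]
    have hTmul : (ℓ:ℝ≥0∞) * (T * ENNReal.ofReal (1/(ℓ:ℝ))) = T := by
      calc (ℓ:ℝ≥0∞) * (T * ENNReal.ofReal (1/(ℓ:ℝ)))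
          = T * ((ℓ:ℝ≥0∞) * ENNReal.ofReal (1/(ℓ:ℝ))) := by ring
        _ = T := by rw [hmul ℓ hℓ1, mul_one]
    constructor
    · -- lower: c * vol A ≤ T + ε ℓ
      have step : ∫⁻ v in S, g v ≤ T * ENNReal.ofReal (1/(ℓ:ℝ)) + ∫⁻ v in S, φ v := by
        calc ∫⁻ v in S, g v ≤ ∫⁻ v in S, (T + φ v) := lintegral_mono fun v => hub v
          _ = (∫⁻ _ in S, T) + ∫⁻ v in S, φ v := lintegral_add_right' _ hφmeas.aemeasurable
          _ = T * volume S + ∫⁻ v in S, φ v := by rw [setLIntegral_const]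
          _ = T * ENNReal.ofReal (1/(ℓ:ℝ)) + ∫⁻ v in S, φ v := by rw [hvolS]
      have := mul_le_mul_right step (ℓ:ℝ≥0∞)
      rw [hK, hKmul, mul_add, hTmul] at this
      exact this
    · -- upper: T ≤ c * vol A + ε ℓ
      have step : T * ENNReal.ofReal (1/(ℓ:ℝ)) ≤ (∫⁻ v in S, g v) + ∫⁻ v in S, φ v := by
        calc T * ENNReal.ofReal (1/(ℓ:ℝ)) = T * volume S := by rw [hvolS]
          _ = ∫⁻ _ in S, T := (setLIntegral_const _ _).symm
          _ ≤ ∫⁻ v in S, (g v + φ v) := lintegral_mono fun v => hlb v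
          _ = (∫⁻ v in S, g v) + ∫⁻ v in S, φ v := lintegral_add_right' _ hφmeas.aemeasurable
      have := mul_le_mul_right step (ℓ:ℝ≥0∞)
      rw [mul_add, hK, hKmul, hTmul] at this
      exact this
  -- squeeze
  have hMne : c * volume A ≠ ⊤ := ENNReal.mul_ne_top ENNReal.ofReal_ne_top hfin
  have hlow : Tendsto (fun ℓ : ℕ => c * volume A - ε ℓ) atTop (nhds (c * volume A)) := by
    have := ENNReal.Tendsto.sub (tendsto_const_nhds (x := c * volume A)) hε (Or.inl hMne)
    simpa using this
  have hup : Tendsto (fun ℓ : ℕ => c * volume A + ε ℓ) atTop (nhds (c * volume A)) := by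
    have := Tendsto.add (tendsto_const_nhds (x := c * volume A)) hε
    simpa using this
  refine tendsto_of_tendsto_of_tendsto_of_le_of_le' hlow hup ?_ ?_
  · filter_upwards [eventually_ge_atTop 1] with ℓ hℓ1
    exact tsub_le_iff_right.mpr (hbounds ℓ hℓ1).1
  · filter_upwards [eventually_ge_atTop 1] with ℓ hℓ1
    exact (hbounds ℓ hℓ1).2

theorem stmt_17 (n : ℕ) (a : Fin n → ℝ) (ha : a ≠ 0)
    (Gt : Set (Fin n → ℝ)) (hGm : MeasurableSet Gt) (hGb : Bornology.IsBounded Gt)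
    (c₁ c₂ : ℝ) (h0 : 0 < c₁) (h12 : c₁ ≤ c₂) (h21 : c₂ < 1)
    (χ : ℝ → ℝ) (hχ : ∀ t : ℝ, χ t = if Int.fract t ∈ Set.Ioo c₁ c₂ then 1 else 0) :
    Tendsto
      (fun ℓ : ℕ => volume
        {x | x ∈ Gt ∧ χ ((∑ k, a k * x k) / (Real.sqrt (∑ k, a k ^ 2) / (ℓ : ℝ))) = 1})
      atTop (nhds (ENNReal.ofReal (c₂ - c₁) * volume Gt)) := by
  rcases n with - | m
  · exact absurd (Subsingleton.elim a 0) ha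
  set r := Real.sqrt (∑ k, a k ^ 2) with hrdef
  have hr : 0 < r := by
    apply Real.sqrt_pos.mpr
    obtain ⟨k, hk⟩ := Function.ne_iff.mp ha
    exact Finset.sum_pos' (fun i _ => sq_nonneg _) ⟨k, Finset.mem_univ k, lt_of_le_of_ne (sq_nonneg _) (Ne.symm (pow_ne_zero 2 hk))⟩
  have hr2 : r ^ 2 = ∑ k, a k ^ 2 := Real.sq_sqrt (by positivity)
  -- the unit vector
  set u : EuclideanSpace ℝ (Fin (m + 1)) := WithLp.toLp 2 (fun k => a k / r) with hudef
  have huu : (inner ℝ u u : ℝ) = 1 := by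
    simp only [PiLp.inner_apply, RCLike.inner_apply, conj_trivial, hudef]
    have : ∀ k, a k / r * (a k / r) = a k ^ 2 / r ^ 2 := by
      intro k; field_simp
    rw [Finset.sum_congr rfl fun k _ => this k, ← Finset.sum_div, ← hr2]
    field_simp
  have horth : Orthonormal ℝ (Set.restrict {(0 : Fin (m + 1))} fun _ => u) := by
    rw [orthonormal_iff_ite]
    rintro ⟨i, hi⟩ ⟨j, hj⟩
    simp only [Set.mem_singleton_iff] at hi hj
    subst hi; subst hj
    rw [if_pos rfl]; exact huu
  obtain ⟨b, hb⟩ := horth.exists_orthonormalBasis_extension_of_card_eq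
    (by simp) 
  have hb0 : b 0 = u := hb 0 rfl
  -- the composite measurable equivalence
  set e1 := (MeasurableEquiv.toLp 2 (Fin (m + 1) → ℝ)).symm with he1
  set e2 := MeasurableEquiv.piFinSuccAbove (fun _ : Fin (m + 1) => ℝ) 0 with he2
  set Φ : (Fin (m + 1) → ℝ) ≃ᵐ ℝ × (Fin m → ℝ) :=
    (e1.symm.trans (b.repr.toHomeomorph.toMeasurableEquiv)).trans (e1.trans e2) with hΦdef
  have hΦmp : MeasurePreserving Φ volume volume := by
    have h1 := (EuclideanSpace.volume_preserving_symm_measurableEquiv_toLp (Fin (m + 1))).symm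
    have h2 := b.repr.measurePreserving
    have h3 := EuclideanSpace.volume_preserving_symm_measurableEquiv_toLp (Fin (m + 1))
    have h4 := volume_preserving_piFinSuccAbove (fun _ : Fin (m + 1) => ℝ) 0
    exact ((h4.comp h3).comp h2).comp h1
  have hΦ1 : ∀ x : Fin (m + 1) → ℝ, (Φ x).1 = (∑ k, a k * x k) / r := by
    intro x
    have hx : (Φ x).1 = b.repr (e1.symm x) 0 := rfl
    rw [hx, OrthonormalBasis.repr_apply_apply, hb0]
    simp only [PiLp.inner_apply, RCLike.inner_apply, conj_trivial, hudef]
    have hcoord : ∀ k, (e1.symm x) k = x k := fun k => rfl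
    rw [Finset.sum_congr rfl fun k _ => by rw [hcoord k]]
    rw [Finset.sum_div]
    exact Finset.sum_congr rfl fun k _ => by field_simp
  set c := ENNReal.ofReal (c₂ - c₁) with hcdef
  set G' : Set (ℝ × (Fin m → ℝ)) := ⇑Φ.symm ⁻¹' Gt with hG'def
  have hG'm : MeasurableSet G' := Φ.symm.measurable hGm
  have hGvol : volume G' = volume Gt :=
    (MeasurePreserving.symm Φ hΦmp).measure_preimage hGm.nullMeasurableSet
  set A : (Fin m → ℝ) → Set ℝ := fun y => (fun t => (t, y)) ⁻¹' G' with hAdef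
  have hAm : ∀ y, MeasurableSet (A y) := fun y => measurable_prodMk_right hG'm
  have hFmeas : Measurable (fun y => volume (A y)) := measurable_measure_prodMk_right hG'm
  have hFint : ∫⁻ y, volume (A y) = volume Gt := by
    calc ∫⁻ y, volume (A y) = (volume.prod volume) G' := (Measure.prod_apply_symm hG'm).symm
      _ = volume G' := by rw [← Measure.volume_eq_prod]
      _ = volume Gt := hGvol
  have hGfin : volume Gt ≠ ⊤ := hGb.measure_lt_top.ne
  have haefin : ∀ᵐ y, volume (A y) ≠ ⊤ := by
    filter_upwards [ae_lt_top hFmeas (by rw [hFint]; exact hGfin)] with y hy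
    exact hy.ne
  set Eset : ℕ → Set ℝ := fun ℓ => {t : ℝ | Int.fract ((ℓ:ℝ) * t) ∈ Set.Ioo c₁ c₂} with hEdef
  set W : ℕ → Set (ℝ × (Fin m → ℝ)) :=
    fun ℓ => G' ∩ {p | Int.fract ((ℓ:ℝ) * p.1) ∈ Set.Ioo c₁ c₂} with hWdef
  have hWm : ∀ ℓ, MeasurableSet (W ℓ) := fun ℓ =>
    hG'm.inter ((measurable_fract.comp (measurable_fst.const_mul (ℓ:ℝ))) measurableSet_Ioo)
  have hWvol : ∀ ℓ, volume (W ℓ) = ∫⁻ y, volume (A y ∩ Eset ℓ) := by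
    intro ℓ
    rw [Measure.volume_eq_prod, Measure.prod_apply_symm (hWm ℓ)]
    rfl
  have hχ1 : ∀ t : ℝ, (χ t = 1 ↔ Int.fract t ∈ Set.Ioo c₁ c₂) := by
    intro t
    rw [hχ]
    split_ifs with h <;> simp [h]
  have hmain : ∀ ℓ : ℕ,
      volume {x | x ∈ Gt ∧ χ ((∑ k, a k * x k) / (r / (ℓ:ℝ))) = 1} = volume (W ℓ) := by
    intro ℓ
    have harg : ∀ x : Fin (m+1) → ℝ,
        (∑ k, a k * x k) / (r / (ℓ:ℝ)) = (ℓ:ℝ) * ((∑ k, a k * x k) / r) := by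
      intro x
      rw [div_div_eq_mul_div]
      ring
    have hset : {x | x ∈ Gt ∧ χ ((∑ k, a k * x k) / (r / (ℓ:ℝ))) = 1} = ⇑Φ ⁻¹' (W ℓ) := by
      ext x
      simp only [Set.mem_setOf_eq, Set.mem_preimage, hWdef, Set.mem_inter_iff, hG'def,
        MeasurableEquiv.symm_apply_apply]
      rw [hχ1, harg x, hΦ1 x]
    rw [hset, hΦmp.measure_preimage (hWm ℓ).nullMeasurableSet]
  have hlim : ∀ᵐ y, Tendsto (fun ℓ : ℕ => volume (A y ∩ Eset ℓ)) atTop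
      (nhds (c * volume (A y))) := by
    filter_upwards [haefin] with y hy
    exact oneD h0 h12 h21 (hAm y) hy
  have hFn_meas : ∀ ℓ : ℕ, Measurable fun y => volume (A y ∩ Eset ℓ) := fun ℓ =>
    measurable_measure_prodMk_right (μ := (volume : Measure ℝ)) (hWm ℓ)
  have hbound : ∀ ℓ : ℕ, (fun y => volume (A y ∩ Eset ℓ)) ≤ᵐ[volume] fun y => volume (A y) :=
    fun ℓ => Eventually.of_forall fun y => measure_mono Set.inter_subset_left
  have hdc := tendsto_lintegral_of_dominated_convergence (fun y => volume (A y)) hFn_meas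
    hbound (by rw [hFint]; exact hGfin) hlim
  have hlimval : ∫⁻ y, c * volume (A y) = c * volume Gt := by
    rw [lintegral_const_mul c hFmeas, hFint]
  rw [hlimval] at hdc
  exact Tendsto.congr (fun ℓ => ((hmain ℓ).trans (hWvol ℓ)).symm) hdc
end
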